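/- Let U : C → ℝ be a function on a set C, let (Ω, 𝓕, ℙ) be a probability space with a stopping time ν and a localising sequence τ_n ↑ ∞, r > 0, and processes such that for all n: U(φ,x) = E[e^{−r(ν∧τ_n)} U(Y_{ν∧τ_n})] + E[∫₀^{ν∧τ_n} e^{−rt} H(Y_t) dt], where Y is a process with Y₀ = (φ,x), H ≤ 0, U bounded, ν < ∞ a.s., U(Y_ν) = 0 a.s., and U(Y_t) ≥ 0 for t ∈ [0,ν]. Then U(φ,x) ≤ 0. -/
import Mathlib


open MeasureTheory Filter

/-- abstract stochastic maximum principle argument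
(5.41)–(5.43): from the Itô/Dynkin representation of `U` along a
localising sequence, with `H ≤ 0`, `U` bounded, `r > 0`, `U(Y_ν) = 0` and
`U(Y_t) ≥ 0` on `[0,ν]`, it follows that `U(φ,x) ≤ 0`. -/
theorem stmt14 {Ω : Type*} [MeasurableSpace Ω] (P : Measure Ω)
    [IsProbabilityMeasure P]
    (U H : ℝ × ℝ → ℝ) (Y : ℝ → Ω → ℝ × ℝ) (ν : Ω → ℝ) (τ : ℕ → Ω → ℝ)
    (r : ℝ) (hr : 0 < r) (φ x : ℝ)
    (hY0 : ∀ ω, Y 0 ω = (φ, x))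
    (hν_nonneg : ∀ ω, 0 ≤ ν ω)
    (hτ_nonneg : ∀ n ω, 0 ≤ τ n ω)
    (hτ_mono : ∀ ω, Monotone (fun n => τ n ω))
    (hτ_top : ∀ ω, Tendsto (fun n => τ n ω) atTop atTop)
    (hH : ∀ p, H p ≤ 0)
    (hUbdd : ∃ C, ∀ p, |U p| ≤ C)
    (hrepr : ∀ n, U (φ, x) =
      (∫ ω, Real.exp (-(r * min (ν ω) (τ n ω))) * U (Y (min (ν ω) (τ n ω)) ω) ∂P)
      + ∫ ω, (∫ t in (0 : ℝ)..(min (ν ω) (τ n ω)), Real.exp (-(r * t)) * H (Y t ω)) ∂P)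
    (hUν : ∀ᵐ ω ∂P, U (Y (ν ω) ω) = 0)
    (hUnonneg : ∀ᵐ ω ∂P, ∀ t ∈ Set.Icc 0 (ν ω), 0 ≤ U (Y t ω)) :
    U (φ, x) ≤ 0 := by
  obtain ⟨C, hC⟩ := hUbdd
  set f : ℕ → Ω → ℝ := fun n ω =>
    Real.exp (-(r * min (ν ω) (τ n ω))) * U (Y (min (ν ω) (τ n ω)) ω) with hf
  -- second term is nonpositive
  have hB : ∀ n, (∫ ω, (∫ t in (0 : ℝ)..(min (ν ω) (τ n ω)),
      Real.exp (-(r * t)) * H (Y t ω)) ∂P) ≤ 0 := by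
    intro n
    apply integral_nonpos_of_ae
    filter_upwards with ω
    simp only [Pi.zero_apply]
    have h0 : (0:ℝ) ≤ min (ν ω) (τ n ω) := le_min (hν_nonneg ω) (hτ_nonneg n ω)
    have hnn : 0 ≤ ∫ t in (0:ℝ)..(min (ν ω) (τ n ω)),
        -(Real.exp (-(r * t)) * H (Y t ω)) :=
      intervalIntegral.integral_nonneg h0 fun u _ =>
        neg_nonneg.2 (mul_nonpos_of_nonneg_of_nonpos (Real.exp_pos _).le (hH _))
    rw [intervalIntegral.integral_neg] at hnn
    linarith
  have hA : ∀ n, U (φ, x) ≤ ∫ ω, f n ω ∂P := fun n => by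
    rw [hrepr n]; linarith [hB n]
  by_contra hcon
  push_neg at hcon
  -- then each ∫ f n > 0, hence f n is integrable
  have hint : ∀ n, Integrable (f n) P := by
    intro n
    by_contra h
    have h0 := integral_undef h
    have h1 := hA n
    rw [h0] at h1
    linarith
  -- pointwise limit
  have hbound : ∀ n, ∀ᵐ ω ∂P, ‖f n ω‖ ≤ C := by
    intro n
    filter_upwards with ω
    have h1 : Real.exp (-(r * min (ν ω) (τ n ω))) ≤ 1 := by
      apply Real.exp_le_one_iff.mpr
      have : 0 ≤ r * min (ν ω) (τ n ω) :=
        mul_nonneg hr.le (le_min (hν_nonneg ω) (hτ_nonneg n ω))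
      linarith
    calc ‖f n ω‖ = Real.exp (-(r * min (ν ω) (τ n ω))) *
          |U (Y (min (ν ω) (τ n ω)) ω)| := by
          rw [hf]; simp [Real.norm_eq_abs, abs_mul, abs_of_pos (Real.exp_pos _)]
      _ ≤ 1 * C := by
          apply mul_le_mul h1 (hC _) (abs_nonneg _) zero_le_one
      _ = C := one_mul C
  have hlim : ∀ᵐ ω ∂P, Tendsto (fun n => f n ω) atTop
      (nhds (Real.exp (-(r * ν ω)) * U (Y (ν ω) ω))) := by
    filter_upwards with ω
    have hev : ∀ᶠ n in atTop, f n ω = Real.exp (-(r * ν ω)) * U (Y (ν ω) ω) := by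
      filter_upwards [(hτ_top ω).eventually_ge_atTop (ν ω)] with n hn
      rw [hf]; simp [min_eq_left hn]
    exact Tendsto.congr' (hev.mono fun n h => h.symm) tendsto_const_nhds
  have hDCT := tendsto_integral_of_dominated_convergence (fun _ => C)
    (fun n => (hint n).aestronglyMeasurable) (integrable_const C) hbound hlim
  have hzero : (∫ ω, Real.exp (-(r * ν ω)) * U (Y (ν ω) ω) ∂P) = 0 := by
    have : (fun ω => Real.exp (-(r * ν ω)) * U (Y (ν ω) ω)) =ᵐ[P] 0 := by
      filter_upwards [hUν] with ω h; simp [h]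
    rw [integral_congr_ae this]; simp
  rw [hzero] at hDCT
  have := ge_of_tendsto hDCT (Eventually.of_forall hA)
  linarith
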